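/- For every t ∈ [0, 1] and every cross-section of a regular tetrahedron Q of side length ℓ by a plane Π_t moving linearly in t (i.e., Π_t = {x : x·n = t·s₁ + (1−t)·s₀} for a fixed unit normal n), the perimeter function t ↦ perimeter(Π_t ∩ Q) is affine (linear in t) on any subinterval during which Π_t meets no vertex of Q. -/

import Mathlib

open MeasureTheory
open Set MeasureTheory
open scoped RealInnerProductSpace
set_option maxHeartbeats 1000000
set_option linter.unusedSectionVars false

section AuxGeneric

variable {E : Type*} [NormedAddCommGroup E] [InnerProductSpace ℝ E]

lemma aux_plane_convex (n : E) (s : ℝ) : Convex ℝ {w : E | ⟪w, n⟫ = s} := by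
  have h : {w : E | ⟪w, n⟫ = s} = {w : E | (innerSL ℝ n : E →L[ℝ] ℝ) w = s} := by
    ext w; simp [real_inner_comm]
  rw [h]
  exact convex_hyperplane ((innerSL ℝ n : E →L[ℝ] ℝ) : E →ₗ[ℝ] ℝ).isLinear s

lemma aux_chord_eq (n : E) (s : ℝ) (x y z : E)
    (hx : ⟪x, n⟫ < s) (hy : s < ⟪y, n⟫) (hz : s < ⟪z, n⟫) :
    {w : E | ⟪w, n⟫ = s} ∩ convexHull ℝ {x, y, z} =
      segment ℝ (x + ((s - ⟪x, n⟫) / (⟪y, n⟫ - ⟪x, n⟫)) • (y - x))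
                (x + ((s - ⟪x, n⟫) / (⟪z, n⟫ - ⟪x, n⟫)) • (z - x)) := by
  set fx := ⟪x, n⟫; set fy := ⟪y, n⟫; set fz := ⟪z, n⟫
  set u := (s - fx) / (fy - fx) with hu
  set v := (s - fx) / (fz - fx) with hv
  have hyx : (0:ℝ) < fy - fx := by linarith
  have hzx : (0:ℝ) < fz - fx := by linarith
  have hsx : (0:ℝ) < s - fx := by linarith
  have hu0 : 0 < u := div_pos hsx hyx
  have hv0 : 0 < v := div_pos hsx hzx
  have hu1 : u * (fy - fx) = s - fx := div_mul_cancel₀ _ (ne_of_gt hyx)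
  have hv1 : v * (fz - fx) = s - fx := div_mul_cancel₀ _ (ne_of_gt hzx)
  set q1 := x + u • (y - x) with hq1
  set q2 := x + v • (z - x) with hq2
  have hq1f : ⟪q1, n⟫ = s := by
    rw [hq1, inner_add_left, real_inner_smul_left, inner_sub_left]
    show fx + u * (fy - fx) = s; rw [hu1]; ring
  have hq2f : ⟪q2, n⟫ = s := by
    rw [hq2, inner_add_left, real_inner_smul_left, inner_sub_left]
    show fx + v * (fz - fx) = s; rw [hv1]; ring
  have hxyz : ({x, y, z} : Set E) ⊆ convexHull ℝ {x, y, z} := subset_convexHull ℝ _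
  have hu1' : u ≤ 1 := by rw [hu, div_le_one hyx]; linarith
  have hv1' : v ≤ 1 := by rw [hv, div_le_one hzx]; linarith
  have hq1mem : q1 ∈ convexHull ℝ ({x, y, z} : Set E) := by
    have h : q1 = (1 - u) • x + u • y := by rw [hq1]; module
    rw [h]
    exact (convex_convexHull ℝ _) (hxyz (by simp)) (hxyz (by simp)) (by linarith) hu0.le
      (by ring)
  have hq2mem : q2 ∈ convexHull ℝ ({x, y, z} : Set E) := by
    have h : q2 = (1 - v) • x + v • z := by rw [hq2]; module
    rw [h]
    exact (convex_convexHull ℝ _) (hxyz (by simp)) (hxyz (by simp)) (by linarith) hv0.le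
      (by ring)
  apply Subset.antisymm
  · rintro w ⟨hw1, hw2⟩
    rw [show ({x, y, z} : Set E) = insert x {y, z} from rfl,
      convexHull_insert (by simp : ({y, z} : Set E).Nonempty)] at hw2
    rw [mem_convexJoin] at hw2
    obtain ⟨x', hx', m, hm, hwm⟩ := hw2
    rw [mem_singleton_iff] at hx'
    subst hx'
    rw [convexHull_pair] at hm
    obtain ⟨β', β, hβ'0, hβ0, hβs, rfl⟩ := hm
    obtain ⟨θ', θ, hθ'0, hθ0, hθs, rfl⟩ := hwm
    have hfw : θ' * fx + θ * (β' * fy + β * fz) = s := by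
      have h := hw1
      simp only [mem_setOf_eq] at h
      rw [inner_add_left, real_inner_smul_left, real_inner_smul_left, inner_add_left,
        real_inner_smul_left, real_inner_smul_left] at h
      linarith [h]
    set α := θ * β / v with hα
    have hα0 : 0 ≤ α := div_nonneg (mul_nonneg hθ0 hβ0) hv0.le
    have hαv : α * v = θ * β := div_mul_cancel₀ _ (ne_of_gt hv0)
    have key : θ * β' * (fy - fx) + θ * β * (fz - fx) = s - fx := by
      linear_combination hfw - fx * θ * hβs - fx * hθs
    have hα1 : α ≤ 1 := by
      rw [hα, div_le_one hv0, hv, le_div_iff₀ hzx]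
      nlinarith [key, mul_nonneg (mul_nonneg hθ0 hβ'0) hyx.le]
    have hcoeff1 : (1 - α) * u = θ * β' := by
      have h1 : (1 - α) * u * (fy - fx) = θ * β' * (fy - fx) := by
        linear_combination (1 - α) * hu1 - key + α * hv1 - (fz - fx) * hαv
      exact mul_right_cancel₀ (ne_of_gt hyx) h1
    refine ⟨1 - α, α, by linarith, hα0, by ring, ?_⟩
    rw [hq1, hq2]
    have hθ' : θ' = 1 - θ := by linarith
    rw [hθ']
    match_scalars
    · linear_combination (-1 : ℝ) * hcoeff1 - hαv - θ * hβs
    · linear_combination hcoeff1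
    · linear_combination hαv
  · intro w hw
    exact ⟨(aux_plane_convex n s).segment_subset hq1f hq2f hw,
      ((convex_convexHull ℝ _).segment_subset hq1mem hq2mem) hw⟩

lemma aux_affineIndependent (ℓ : ℝ) (hℓ : 0 < ℓ) (p : Fin 4 → E)
    (hdist : ∀ i j, i ≠ j → dist (p i) (p j) = ℓ) : AffineIndependent ℝ p := by
  rw [affineIndependent_iff_linearIndependent_vsub ℝ p 0]
  rw [Fintype.linearIndependent_iff]
  intro c hc
  have hℓ2 : (0:ℝ) < ℓ^2 := by positivity
  have hnorm : ∀ i : {x : Fin 4 // x ≠ 0}, ‖p i -ᵥ p 0‖ = ℓ := fun i => by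
    rw [vsub_eq_sub, ← dist_eq_norm]; exact hdist i 0 i.2
  have hG : ∀ i j : {x : Fin 4 // x ≠ 0},
      ⟪p i -ᵥ p 0, p j -ᵥ p 0⟫ = if i = j then ℓ^2 else ℓ^2/2 := by
    intro i j
    by_cases h : i = j
    · subst h
      rw [if_pos rfl, real_inner_self_eq_norm_sq, hnorm]
    · rw [if_neg h]
      have h1 : ‖(p i -ᵥ p 0 : E) - (p j -ᵥ p 0)‖ = ℓ := by
        have : (p i -ᵥ p 0 : E) - (p j -ᵥ p 0) = p i - p j := by
          simp [vsub_eq_sub]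
        rw [this, ← dist_eq_norm]
        exact hdist i j (fun hij => h (Subtype.ext (by exact_mod_cast hij)))
      have h2 := @norm_sub_sq_real E _ _ (p i -ᵥ p 0) (p j -ᵥ p 0)
      rw [h1, hnorm, hnorm] at h2
      linarith
  have key : ∀ j : {x : Fin 4 // x ≠ 0}, ((∑ i, c i) + c j) * (ℓ^2/2) = 0 := by
    intro j
    have h0 : ⟪∑ i, c i • (p i -ᵥ p 0), p j -ᵥ p 0⟫ = (0:ℝ) := by
      rw [hc]; exact inner_zero_left _
    rw [sum_inner] at h0
    simp only [real_inner_smul_left, hG] at h0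
    have : ∑ i : {x : Fin 4 // x ≠ 0}, c i * (if i = j then ℓ^2 else ℓ^2/2)
        = (∑ i, c i) * (ℓ^2/2) + c j * (ℓ^2/2) := by
      have hsp : ∀ i : {x : Fin 4 // x ≠ 0}, c i * (if i = j then ℓ^2 else ℓ^2/2)
          = c i * (ℓ^2/2) + (if i = j then c i * (ℓ^2/2) else 0) := by
        intro i; split <;> ring
      rw [Finset.sum_congr rfl (fun i _ => hsp i), Finset.sum_add_distrib,
        Finset.sum_ite_eq' Finset.univ j (fun i => c i * (ℓ^2/2)), if_pos (Finset.mem_univ j),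
        ← Finset.sum_mul]
    rw [this] at h0
    linarith
  have hcj : ∀ j : {x : Fin 4 // x ≠ 0}, c j = -(∑ i, c i) := by
    intro j
    have := key j
    have h2 : (∑ i, c i) + c j = 0 := by
      rcases mul_eq_zero.1 this with h | h
      · exact h
      · linarith
    linarith
  have hS : (∑ i, c i) = 0 := by
    have h1 : (∑ i, c i) = (Fintype.card {x : Fin 4 // x ≠ 0} : ℝ) * (-(∑ i, c i)) := by
      conv_lhs => rw [Finset.sum_congr rfl (fun i _ => hcj i)]
      rw [Finset.sum_const, nsmul_eq_mul, Finset.card_univ]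
    have h2 : (0:ℝ) ≤ (Fintype.card {x : Fin 4 // x ≠ 0} : ℝ) := Nat.cast_nonneg _
    nlinarith [h1, h2]
  intro i
  rw [hcj i, hS, neg_zero]

variable [MeasurableSpace E] [BorelSpace E]

lemma aux_chord_measure (n : E) (s : ℝ) (x y z : E)
    (hx : ⟪x, n⟫ < s) (hy : s < ⟪y, n⟫) (hz : s < ⟪z, n⟫) :
    μH[1] ({w : E | ⟪w, n⟫ = s} ∩ convexHull ℝ {x, y, z}) =
      ENNReal.ofReal ((s - ⟪x, n⟫) *
        ‖(⟪y, n⟫ - ⟪x, n⟫)⁻¹ • (y - x) - (⟪z, n⟫ - ⟪x, n⟫)⁻¹ • (z - x)‖) := by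
  rw [aux_chord_eq n s x y z hx hy hz, MeasureTheory.hausdorffMeasure_segment, edist_dist,
    dist_eq_norm]
  congr 1
  have h : (x + ((s - ⟪x, n⟫) / (⟪y, n⟫ - ⟪x, n⟫)) • (y - x)) -
      (x + ((s - ⟪x, n⟫) / (⟪z, n⟫ - ⟪x, n⟫)) • (z - x)) =
      (s - ⟪x, n⟫) • ((⟪y, n⟫ - ⟪x, n⟫)⁻¹ • (y - x) - (⟪z, n⟫ - ⟪x, n⟫)⁻¹ • (z - x)) := by
    rw [div_eq_mul_inv, div_eq_mul_inv]; module
  rw [h, norm_smul, Real.norm_eq_abs, abs_of_pos (by linarith)]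

lemma aux_halfspace_lt (n : E) (s : ℝ) : Convex ℝ {w : E | ⟪w, n⟫ < s} := by
  have h : {w : E | ⟪w, n⟫ < s} = {w : E | (innerSL ℝ n : E →L[ℝ] ℝ) w < s} := by
    ext w; simp [real_inner_comm]
  rw [h]
  exact convex_halfSpace_lt ((innerSL ℝ n : E →L[ℝ] ℝ) : E →ₗ[ℝ] ℝ).isLinear s

lemma aux_halfspace_gt (n : E) (s : ℝ) : Convex ℝ {w : E | s < ⟪w, n⟫} := by
  have h : {w : E | s < ⟪w, n⟫} = {w : E | s < (innerSL ℝ n : E →L[ℝ] ℝ) w} := by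
    ext w; simp [real_inner_comm]
  rw [h]
  exact convex_halfSpace_gt ((innerSL ℝ n : E →L[ℝ] ℝ) : E →ₗ[ℝ] ℝ).isLinear s

lemma aux_empty_lt (n : E) (s : ℝ) (x y z : E)
    (hx : ⟪x, n⟫ < s) (hy : ⟪y, n⟫ < s) (hz : ⟪z, n⟫ < s) :
    {w : E | ⟪w, n⟫ = s} ∩ convexHull ℝ {x, y, z} = ∅ := by
  have hsub : convexHull ℝ ({x, y, z} : Set E) ⊆ {w : E | ⟪w, n⟫ < s} := by
    apply convexHull_min _ (aux_halfspace_lt n s)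
    rintro w (rfl | rfl | rfl) <;> assumption
  ext w
  simp only [mem_inter_iff, mem_setOf_eq, mem_empty_iff_false, iff_false, not_and]
  intro h1 h2
  exact absurd h1 (ne_of_lt (hsub h2))

lemma aux_empty_gt (n : E) (s : ℝ) (x y z : E)
    (hx : s < ⟪x, n⟫) (hy : s < ⟪y, n⟫) (hz : s < ⟪z, n⟫) :
    {w : E | ⟪w, n⟫ = s} ∩ convexHull ℝ {x, y, z} = ∅ := by
  have hsub : convexHull ℝ ({x, y, z} : Set E) ⊆ {w : E | s < ⟪w, n⟫} := by
    apply convexHull_min _ (aux_halfspace_gt n s)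
    rintro w (rfl | rfl | rfl) <;> assumption
  ext w
  simp only [mem_inter_iff, mem_setOf_eq, mem_empty_iff_false, iff_false, not_and]
  intro h1 h2
  exact absurd h1.symm (ne_of_lt (hsub h2))

lemma aux_flip (n : E) (s₀ s₁ t : ℝ) :
    {w : E | ⟪w, n⟫ = (1 - t) * s₀ + t * s₁} =
      {w : E | ⟪w, -n⟫ = (1 - t) * (-s₀) + t * (-s₁)} := by
  ext w; simp only [mem_setOf_eq, inner_neg_right]
  constructor <;> intro h <;> linarith

lemma aux_iso (n : E) (s₀ s₁ a b : ℝ) (x y z : E)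
    (hx : ∀ t ∈ Set.Ioo a b, ⟪x, n⟫ < (1 - t) * s₀ + t * s₁)
    (hy : ∀ t ∈ Set.Ioo a b, (1 - t) * s₀ + t * s₁ < ⟪y, n⟫)
    (hz : ∀ t ∈ Set.Ioo a b, (1 - t) * s₀ + t * s₁ < ⟪z, n⟫) :
    ∃ c₀ c₁ : ℝ, ∀ t ∈ Set.Ioo a b,
      μH[1] ({w : E | ⟪w, n⟫ = (1 - t) * s₀ + t * s₁} ∩ convexHull ℝ {x, y, z}) =
        ENNReal.ofReal (c₀ + c₁ * t) ∧ 0 ≤ c₀ + c₁ * t := by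
  set C := ‖(⟪y, n⟫ - ⟪x, n⟫)⁻¹ • (y - x) - (⟪z, n⟫ - ⟪x, n⟫)⁻¹ • (z - x)‖ with hC
  refine ⟨(s₀ - ⟪x, n⟫) * C, (s₁ - s₀) * C, fun t ht => ?_⟩
  have h1 := aux_chord_measure n ((1 - t) * s₀ + t * s₁) x y z (hx t ht) (hy t ht) (hz t ht)
  have he : (s₀ - ⟪x, n⟫) * C + (s₁ - s₀) * C * t =
      ((1 - t) * s₀ + t * s₁ - ⟪x, n⟫) * C := by ring
  constructor
  · rw [h1]; congr 1; linarith
  · rw [he]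
    exact mul_nonneg (by linarith [hx t ht]) (norm_nonneg _)

lemma aux_iso' (n : E) (s₀ s₁ a b : ℝ) (x y z : E)
    (hx : ∀ t ∈ Set.Ioo a b, (1 - t) * s₀ + t * s₁ < ⟪x, n⟫)
    (hy : ∀ t ∈ Set.Ioo a b, ⟪y, n⟫ < (1 - t) * s₀ + t * s₁)
    (hz : ∀ t ∈ Set.Ioo a b, ⟪z, n⟫ < (1 - t) * s₀ + t * s₁) :
    ∃ c₀ c₁ : ℝ, ∀ t ∈ Set.Ioo a b,
      μH[1] ({w : E | ⟪w, n⟫ = (1 - t) * s₀ + t * s₁} ∩ convexHull ℝ {x, y, z}) =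
        ENNReal.ofReal (c₀ + c₁ * t) ∧ 0 ≤ c₀ + c₁ * t := by
  obtain ⟨c₀, c₁, h⟩ := aux_iso (-n) (-s₀) (-s₁) a b x y z
    (fun t ht => by simp only [inner_neg_right]; linarith [hx t ht])
    (fun t ht => by simp only [inner_neg_right]; linarith [hy t ht])
    (fun t ht => by simp only [inner_neg_right]; linarith [hz t ht])
  exact ⟨c₀, c₁, fun t ht => by rw [aux_flip n s₀ s₁ t]; exact h t ht⟩

lemma aux_face (n : E) (s₀ s₁ a b : ℝ) (x y z : E)
    (hx : (∀ t ∈ Set.Ioo a b, ⟪x, n⟫ < (1 - t) * s₀ + t * s₁) ∨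
          (∀ t ∈ Set.Ioo a b, (1 - t) * s₀ + t * s₁ < ⟪x, n⟫))
    (hy : (∀ t ∈ Set.Ioo a b, ⟪y, n⟫ < (1 - t) * s₀ + t * s₁) ∨
          (∀ t ∈ Set.Ioo a b, (1 - t) * s₀ + t * s₁ < ⟪y, n⟫))
    (hz : (∀ t ∈ Set.Ioo a b, ⟪z, n⟫ < (1 - t) * s₀ + t * s₁) ∨
          (∀ t ∈ Set.Ioo a b, (1 - t) * s₀ + t * s₁ < ⟪z, n⟫)) :
    ∃ c₀ c₁ : ℝ, ∀ t ∈ Set.Ioo a b,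
      μH[1] ({w : E | ⟪w, n⟫ = (1 - t) * s₀ + t * s₁} ∩ convexHull ℝ {x, y, z}) =
        ENNReal.ofReal (c₀ + c₁ * t) ∧ 0 ≤ c₀ + c₁ * t := by
  have hyxz : ({y, x, z} : Set E) = {x, y, z} := Set.insert_comm y x {z}
  have hzxy : ({z, x, y} : Set E) = {x, y, z} := by
    ext w; simp only [mem_insert_iff, mem_singleton_iff]; tauto
  rcases hx with hx | hx <;> rcases hy with hy | hy <;> rcases hz with hz | hz
  · -- all below
    refine ⟨0, 0, fun t ht => ?_⟩
    rw [aux_empty_lt n _ x y z (hx t ht) (hy t ht) (hz t ht)]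
    simp
  · -- x,y below, z above : isolated z, plane below z... z alone above: iso' pattern? z above, x,y below: isolated z with others below plane: aux_iso' (x:=z)
    obtain ⟨c₀, c₁, h⟩ := aux_iso' n s₀ s₁ a b z x y hz hx hy
    exact ⟨c₀, c₁, fun t ht => by rw [← hzxy]; exact h t ht⟩
  · -- x,z below, y above : isolated y above
    obtain ⟨c₀, c₁, h⟩ := aux_iso' n s₀ s₁ a b y x z hy hx hz
    exact ⟨c₀, c₁, fun t ht => by rw [← hyxz]; exact h t ht⟩
  · -- x below, y,z above: isolated x below
    exact aux_iso n s₀ s₁ a b x y z hx hy hz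
  · -- x above, y,z below: isolated x above
    exact aux_iso' n s₀ s₁ a b x y z hx hy hz
  · -- x,z above, y below: isolated y below
    obtain ⟨c₀, c₁, h⟩ := aux_iso n s₀ s₁ a b y x z hy hx hz
    exact ⟨c₀, c₁, fun t ht => by rw [← hyxz]; exact h t ht⟩
  · -- x,y above, z below: isolated z below
    obtain ⟨c₀, c₁, h⟩ := aux_iso n s₀ s₁ a b z x y hz hx hy
    exact ⟨c₀, c₁, fun t ht => by rw [← hzxy]; exact h t ht⟩
  · -- all above
    refine ⟨0, 0, fun t ht => ?_⟩
    rw [aux_empty_gt n _ x y z (hx t ht) (hy t ht) (hz t ht)]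
    simp

end AuxGeneric

noncomputable abbrev E3 := EuclideanSpace ℝ (Fin 3)

lemma aux_face_subset_coord (B : AffineBasis (Fin 4) ℝ E3) (m : Fin 4) :
    convexHull ℝ (⇑B '' ({m}ᶜ)) ⊆ {w : E3 | B.coord m w = 0} := by
  have hconv : Convex ℝ {w : E3 | B.coord m w = 0} := by
    have : {w : E3 | B.coord m w = 0} = (B.coord m) ⁻¹' {0} := rfl
    rw [this]
    exact (convex_singleton (0:ℝ)).affine_preimage (B.coord m)
  apply convexHull_min _ hconv
  rintro w ⟨l, hl, rfl⟩
  show B.coord m (B l) = 0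
  rw [AffineBasis.coord_apply, if_neg]
  intro h
  exact hl (by simp [h.symm])

lemma aux_frontier (B : AffineBasis (Fin 4) ℝ E3) :
    frontier (convexHull ℝ (range ⇑B)) = ⋃ m, convexHull ℝ (⇑B '' ({m}ᶜ)) := by
  have hcl : IsClosed (convexHull ℝ (range ⇑B)) :=
    ((finite_range ⇑B).isCompact_convexHull ℝ).isClosed
  rw [frontier, hcl.closure_eq]
  apply Subset.antisymm
  · rintro x ⟨hx1, hx2⟩
    rw [B.interior_convexHull] at hx2
    have hx1' : ∀ i, 0 ≤ B.coord i x := by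
      rw [B.convexHull_eq_nonneg_coord] at hx1; exact hx1
    have hx2' : ∃ m, ¬ (0 < B.coord m x) := by
      by_contra h; push_neg at h; exact hx2 (fun i => h i)
    obtain ⟨m, hm⟩ := hx2'
    have hm0 : B.coord m x = 0 := le_antisymm (not_lt.1 hm) (hx1' m)
    refine mem_iUnion.2 ⟨m, ?_⟩
    have hsum : ∑ j : Fin 3, B.coord (m.succAbove j) x = 1 := by
      have h := B.sum_coord_apply_eq_one x
      rw [Fin.sum_univ_succAbove (fun l => B.coord l x) m, hm0, zero_add] at h
      exact h
    have hxrep : x = ∑ j : Fin 3, B.coord (m.succAbove j) x • B (m.succAbove j) := by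
      have h1 := B.affineCombination_coord_eq_self x
      rw [Finset.affineCombination_eq_linear_combination _ _ _
        (B.sum_coord_apply_eq_one x)] at h1
      conv_lhs => rw [← h1]
      rw [Fin.sum_univ_succAbove (fun l => B.coord l x • B l) m, hm0, zero_smul, zero_add]
    have hmem : (Finset.univ : Finset (Fin 3)).affineCombination ℝ (⇑B ∘ m.succAbove)
        (fun j => B.coord (m.succAbove j) x) ∈ convexHull ℝ (range (⇑B ∘ m.succAbove)) :=
      affineCombination_mem_convexHull (fun j _ => hx1' _) hsum
    rw [Finset.affineCombination_eq_linear_combination _ _ _ hsum] at hmem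
    have hrange : range (⇑B ∘ m.succAbove) = ⇑B '' ({m}ᶜ) := by
      rw [range_comp, Fin.range_succAbove]
    rw [hrange] at hmem
    rw [hxrep]
    exact hmem
  · intro x hx
    rw [mem_iUnion] at hx
    obtain ⟨m, hm⟩ := hx
    refine ⟨convexHull_mono (image_subset_range _ _) hm, ?_⟩
    rw [B.interior_convexHull]
    intro h
    have h0 : B.coord m x = 0 := aux_face_subset_coord B m hm
    exact absurd (h m) (by rw [h0]; exact lt_irrefl 0)

lemma aux_pair_subsingleton (B : AffineBasis (Fin 4) ℝ E3) (n : E3) (s : ℝ)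
    (hne : ∀ i, ⟪B i, n⟫ ≠ s) (m m' : Fin 4) (hmm : m ≠ m') :
    ({w : E3 | ⟪w, n⟫ = s} ∩
      (convexHull ℝ (⇑B '' ({m}ᶜ)) ∩ convexHull ℝ (⇑B '' ({m'}ᶜ)))).Subsingleton := by
  classical
  obtain ⟨i, j, hij, hK⟩ : ∃ i j : Fin 4, i ≠ j ∧
      (Finset.univ.erase m).erase m' = {i, j} := by
    apply Finset.card_eq_two.1
    rw [Finset.card_erase_of_mem (Finset.mem_erase.2 ⟨hmm.symm, Finset.mem_univ _⟩),
      Finset.card_erase_of_mem (Finset.mem_univ _), Finset.card_univ]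
    rfl
  have him : i ∈ (Finset.univ.erase m).erase m' := by rw [hK]; simp
  have hjm : j ∈ (Finset.univ.erase m).erase m' := by rw [hK]; simp
  have hi1 : i ≠ m' := (Finset.mem_erase.1 him).1
  have hi2 : i ≠ m := (Finset.mem_erase.1 (Finset.mem_erase.1 him).2).1
  have hj1 : j ≠ m' := (Finset.mem_erase.1 hjm).1
  have hj2 : j ≠ m := (Finset.mem_erase.1 (Finset.mem_erase.1 hjm).2).1
  have hred : ∀ (g : Fin 4 → ℝ), g m = 0 → g m' = 0 → ∑ l, g l = g i + g j := by
    intro g hgm hgm'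
    rw [← Finset.sum_erase_add Finset.univ g (Finset.mem_univ m), hgm, add_zero,
      ← Finset.sum_erase_add _ g (Finset.mem_erase.2 ⟨hmm.symm, Finset.mem_univ _⟩), hgm',
      add_zero, hK, Finset.sum_pair hij]
  have hredE : ∀ (g : Fin 4 → E3), g m = 0 → g m' = 0 → ∑ l, g l = g i + g j := by
    intro g hgm hgm'
    rw [← Finset.sum_erase_add Finset.univ g (Finset.mem_univ m), hgm, add_zero,
      ← Finset.sum_erase_add _ g (Finset.mem_erase.2 ⟨hmm.symm, Finset.mem_univ _⟩), hgm',
      add_zero, hK, Finset.sum_pair hij]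
  -- key facts for any member
  have hfact : ∀ w ∈ ({w : E3 | ⟪w, n⟫ = s} ∩
      (convexHull ℝ (⇑B '' ({m}ᶜ)) ∩ convexHull ℝ (⇑B '' ({m'}ᶜ)))),
      B.coord j w * (⟪B j, n⟫ - ⟪B i, n⟫) = s - ⟪B i, n⟫ ∧
      w = B.coord i w • B i + B.coord j w • B j ∧
      B.coord i w + B.coord j w = 1 := by
    rintro w ⟨hw1, hw2, hw3⟩
    have hcm : B.coord m w = 0 := aux_face_subset_coord B m hw2
    have hcm' : B.coord m' w = 0 := aux_face_subset_coord B m' hw3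
    have hsum1 : B.coord i w + B.coord j w = 1 := by
      have h := B.sum_coord_apply_eq_one w
      rwa [hred (fun l => B.coord l w) hcm hcm'] at h
    have hrep : w = B.coord i w • B i + B.coord j w • B j := by
      have h1 := B.affineCombination_coord_eq_self w
      rw [Finset.affineCombination_eq_linear_combination _ _ _
        (B.sum_coord_apply_eq_one w)] at h1
      conv_lhs => rw [← h1]
      rw [hredE (fun l => B.coord l w • B l) (by simp [hcm]) (by simp [hcm'])]
    have hinner : B.coord i w * ⟪B i, n⟫ + B.coord j w * ⟪B j, n⟫ = s := by
      have h2 : ⟪w, n⟫ = s := hw1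
      conv_lhs at h2 => rw [hrep]
      rw [inner_add_left, real_inner_smul_left, real_inner_smul_left] at h2
      exact h2
    refine ⟨?_, hrep, hsum1⟩
    have : B.coord i w = 1 - B.coord j w := by linarith
    rw [this] at hinner
    linarith [hinner]
  intro w1 hw1 w2 hw2
  obtain ⟨he1, hr1, hs1⟩ := hfact w1 hw1
  obtain ⟨he2, hr2, hs2⟩ := hfact w2 hw2
  have hfij : ⟪B i, n⟫ ≠ ⟪B j, n⟫ := by
    intro h
    rw [h, sub_self, mul_zero] at he1
    exact hne j (by linarith)
  have hcj : B.coord j w1 = B.coord j w2 := by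
    have hd : ⟪B j, n⟫ - ⟪B i, n⟫ ≠ 0 := sub_ne_zero.2 (Ne.symm hfij)
    exact mul_right_cancel₀ hd (he1.trans he2.symm)
  have hci : B.coord i w1 = B.coord i w2 := by linarith
  rw [hr1, hr2, hci, hcj]

section Main

/-- Let `Q ⊂ ℝ³` be a solid regular tetrahedron of side length `ℓ > 0`
and, for a unit vector `n` and reals `s₀ < s₁`, let `Π_t = {x : ⟪x,n⟫ = (1−t)s₀ + t s₁}` be
a plane moving linearly in `t`. On any open interval of parameters `t` for which `Π_t`
contains no vertex of `Q` and meets `Q`, the perimeter `t ↦ length(Π_t ∩ ∂Q)` of the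
cross-section is an affine function of `t`. -/
theorem cross_section_perimeter_affine
    (ℓ : ℝ) (hℓ : 0 < ℓ) (p : Fin 4 → EuclideanSpace ℝ (Fin 3))
    (hdist : ∀ i j, i ≠ j → dist (p i) (p j) = ℓ)
    (n : EuclideanSpace ℝ (Fin 3)) (hn : ‖n‖ = 1) (s₀ s₁ : ℝ) (hs : s₀ < s₁)
    (P : ℝ → Set (EuclideanSpace ℝ (Fin 3)))
    (hP : ∀ t, P t = {x | ⟪x, n⟫ = (1 - t) * s₀ + t * s₁})
    (a b : ℝ) (hab : a < b)
    (hvert : ∀ t ∈ Set.Ioo a b, ∀ i, p i ∉ P t)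
    (hmeet : ∀ t ∈ Set.Ioo a b, (P t ∩ convexHull ℝ (Set.range p)).Nonempty) :
    ∃ c₀ c₁ : ℝ, ∀ t ∈ Set.Ioo a b,
      μH[1] (P t ∩ frontier (convexHull ℝ (Set.range p))) =
        ENNReal.ofReal (c₀ + c₁ * t) := by
  classical
  have hind : AffineIndependent ℝ p := aux_affineIndependent ℓ hℓ p hdist
  have htot : affineSpan ℝ (Set.range p) = ⊤ := by
    rw [hind.affineSpan_eq_top_iff_card_eq_finrank_add_one]
    simp [finrank_euclideanSpace_fin]
  let B : AffineBasis (Fin 4) ℝ (EuclideanSpace ℝ (Fin 3)) := ⟨p, hind, htot⟩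
  have hB : ⇑B = p := rfl
  have hfne : ∀ t ∈ Set.Ioo a b, ∀ i, ⟪p i, n⟫ ≠ (1 - t) * s₀ + t * s₁ := by
    intro t ht i h
    exact hvert t ht i (by rw [hP t]; exact h)
  have hsign : ∀ i, (∀ t ∈ Set.Ioo a b, ⟪p i, n⟫ < (1 - t) * s₀ + t * s₁) ∨
      (∀ t ∈ Set.Ioo a b, (1 - t) * s₀ + t * s₁ < ⟪p i, n⟫) := by
    intro i
    by_contra hcon
    push_neg at hcon
    obtain ⟨⟨t₁, ht₁, h₁⟩, t₂, ht₂, h₂⟩ := hcon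
    have h₁' : (1 - t₁) * s₀ + t₁ * s₁ < ⟪p i, n⟫ :=
      lt_of_le_of_ne h₁ (Ne.symm (hfne t₁ ht₁ i))
    have h₂' : ⟪p i, n⟫ < (1 - t₂) * s₀ + t₂ * s₁ :=
      lt_of_le_of_ne h₂ (hfne t₂ ht₂ i)
    have hcont : Continuous fun t : ℝ => (1 - t) * s₀ + t * s₁ := by continuity
    rcases le_total t₁ t₂ with h12 | h12
    · obtain ⟨t', ht', hft'⟩ := intermediate_value_Icc h12 hcont.continuousOn
        ⟨h₁'.le, h₂'.le⟩
      have htIoo : t' ∈ Set.Ioo a b :=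
        ⟨lt_of_lt_of_le ht₁.1 ht'.1, lt_of_le_of_lt ht'.2 ht₂.2⟩
      exact hfne t' htIoo i hft'.symm
    · obtain ⟨t', ht', hft'⟩ := intermediate_value_Icc' h12 hcont.continuousOn
        ⟨h₁'.le, h₂'.le⟩
      have htIoo : t' ∈ Set.Ioo a b :=
        ⟨lt_of_lt_of_le ht₂.1 ht'.1, lt_of_le_of_lt ht'.2 ht₁.2⟩
      exact hfne t' htIoo i hft'.symm
  have hface : ∀ m : Fin 4, ∃ c₀ c₁ : ℝ, ∀ t ∈ Set.Ioo a b,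
      μH[1] ({w : EuclideanSpace ℝ (Fin 3) | ⟪w, n⟫ = (1 - t) * s₀ + t * s₁} ∩
        convexHull ℝ (p '' ({m}ᶜ))) = ENNReal.ofReal (c₀ + c₁ * t) ∧ 0 ≤ c₀ + c₁ * t := by
    intro m
    have him : p '' ({m}ᶜ) =
        {p (m.succAbove 0), p (m.succAbove 1), p (m.succAbove 2)} := by
      rw [← Fin.range_succAbove m, ← Set.range_comp]
      ext w
      constructor
      · rintro ⟨j, rfl⟩
        fin_cases j <;> simp [Function.comp]
      · rintro (rfl | rfl | rfl)
        exacts [⟨0, rfl⟩, ⟨1, rfl⟩, ⟨2, rfl⟩]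
    rw [him]
    exact aux_face n s₀ s₁ a b _ _ _ (hsign _) (hsign _) (hsign _)
  choose d₀ d₁ hd using hface
  refine ⟨∑ m, d₀ m, ∑ m, d₁ m, fun t ht => ?_⟩
  have hfr : frontier (convexHull ℝ (Set.range p)) = ⋃ m, convexHull ℝ (p '' ({m}ᶜ)) := by
    have h := aux_frontier B
    rw [hB] at h
    exact h
  rw [hP t, hfr, Set.inter_iUnion]
  haveI : NullSingletonClass (μH[1] : Measure (EuclideanSpace ℝ (Fin 3))) :=
    MeasureTheory.Measure.nullSingletonClass_hausdorff (EuclideanSpace ℝ (Fin 3)) one_pos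
  have hdis : Pairwise (Function.onFun (AEDisjoint μH[1]) fun m : Fin 4 =>
      {x : EuclideanSpace ℝ (Fin 3) | ⟪x, n⟫ = (1 - t) * s₀ + t * s₁} ∩
        convexHull ℝ (p '' ({m}ᶜ))) := by
    intro m m' hmm
    have hsub : ({x : EuclideanSpace ℝ (Fin 3) | ⟪x, n⟫ = (1 - t) * s₀ + t * s₁} ∩
          convexHull ℝ (p '' ({m}ᶜ))) ∩
        ({x : EuclideanSpace ℝ (Fin 3) | ⟪x, n⟫ = (1 - t) * s₀ + t * s₁} ∩
          convexHull ℝ (p '' ({m'}ᶜ))) ⊆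
        {w : EuclideanSpace ℝ (Fin 3) | ⟪w, n⟫ = (1 - t) * s₀ + t * s₁} ∩
          (convexHull ℝ (⇑B '' ({m}ᶜ)) ∩ convexHull ℝ (⇑B '' ({m'}ᶜ))) := by
      rw [hB]
      rintro w ⟨⟨hw1, hw2⟩, _, hw3⟩
      exact ⟨hw1, hw2, hw3⟩
    exact measure_mono_null hsub
      (((aux_pair_subsingleton B n ((1 - t) * s₀ + t * s₁)
        (fun i => by rw [hB]; exact fun h => hfne t ht i h) m m' hmm)).countable.measure_zero _)
  have hmeas : ∀ m : Fin 4, NullMeasurableSet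
      ({x : EuclideanSpace ℝ (Fin 3) | ⟪x, n⟫ = (1 - t) * s₀ + t * s₁} ∩
        convexHull ℝ (p '' ({m}ᶜ))) μH[1] := by
    intro m
    refine (IsClosed.measurableSet ?_).nullMeasurableSet
    refine IsClosed.inter ?_ ?_
    · exact isClosed_eq (Continuous.inner continuous_id continuous_const) continuous_const
    · exact (((Set.toFinite ({m}ᶜ : Set (Fin 4))).image p).isCompact_convexHull ℝ).isClosed
  rw [measure_iUnion₀ hdis hmeas, tsum_fintype]
  have hnn : ∀ m ∈ Finset.univ, (0:ℝ) ≤ d₀ m + d₁ m * t := fun m _ => (hd m t ht).2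
  rw [Finset.sum_congr rfl (fun m _ => (hd m t ht).1),
    ← ENNReal.ofReal_sum_of_nonneg hnn]
  congr 1
  rw [Finset.sum_add_distrib, ← Finset.sum_mul]

end Main
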